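/- The theory of dense linear orders without endpoints completely axiomatizes the order theory of the rational and of the real numbers: for every first-order sentence φ in the language containing only the binary relation symbol <, φ is true in the structure ⟨ℚ; <⟩ if and only if φ is a semantic consequence of the theory of dense linear orders without endpoints, and likewise φ is true in ⟨ℝ; <⟩ if and only if φ is a semantic consequence of that theory. -/

import Mathlib

open FirstOrder Language

/-- The structure on a type with `<`, interpreting the unique binary relation
symbol of the language of orders as the strict order `<`. -/
def ltStructure (M : Type*) [LT M] : Language.order.Structure M where
  funMap := fun f => f.elim
  RelMap := fun r x =>
    match r with
    | .le => x 0 < x 1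

/-- The theory of dense linear orders without endpoints for a strict order
symbol, consisting of the axioms O1–O6. -/
def strictDLO : Language.order.Theory :=
  { -- O1 : ∀ x y (x < y → ¬ y < x)
    ∀' ∀' (leSymb.boundedFormula₂ (&0) (&1) ⟹ ∼(leSymb.boundedFormula₂ (&1) (&0))),
    -- O2 : ∀ x y z (x < y ∧ y < z → x < z)
    ∀' ∀' ∀' ((leSymb.boundedFormula₂ (&0) (&1) ⊓ leSymb.boundedFormula₂ (&1) (&2)) ⟹
        leSymb.boundedFormula₂ (&0) (&2)),
    -- O3 : ∀ x y (x < y ∨ x = y ∨ y < x)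
    ∀' ∀' (leSymb.boundedFormula₂ (&0) (&1) ⊔ Term.bdEqual (&0) (&1) ⊔
        leSymb.boundedFormula₂ (&1) (&0)),
    -- O4 : ∀ x y (x < y → ∃ z (x < z ∧ z < y))
    ∀' ∀' (leSymb.boundedFormula₂ (&0) (&1) ⟹
        ∃' (leSymb.boundedFormula₂ (&0) (&2) ⊓ leSymb.boundedFormula₂ (&2) (&1))),
    -- O5 : ∀ x ∃ y (x < y)
    ∀' ∃' (leSymb.boundedFormula₂ (&0) (&1)),
    -- O6 : ∀ x ∃ y (y < x)
    ∀' ∃' (leSymb.boundedFormula₂ (&1) (&0)) }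

namespace StrictDLOAux

variable {M : Type*} [Language.order.Structure M]

/-- The strict relation interpreting the symbol. -/
def slt (a b : M) : Prop := Structure.RelMap (leSymb : Language.order.Relations 2) ![a, b]

theorem model_strictDLO_iff :
    M ⊨ strictDLO ↔
      ((∀ a b : M, slt a b → ¬ slt b a) ∧
       (∀ a b c : M, slt a b → slt b c → slt a c) ∧
       (∀ a b : M, (slt a b ∨ a = b) ∨ slt b a) ∧
       (∀ a b : M, slt a b → ∃ c, slt a c ∧ slt c b) ∧
       (∀ a : M, ∃ b, slt a b) ∧
       (∀ a : M, ∃ b, slt b a)) := by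
  simp [strictDLO, Theory.model_iff, slt, Sentence.Realize, Formula.Realize, Fin.snoc,
    and_assoc]

/-- ℚ and ℝ (and any dense linear order without endpoints) model `strictDLO`. -/
theorem model_of_lo (M : Type*) [LinearOrder M] [DenselyOrdered M] [NoMaxOrder M]
    [NoMinOrder M] : letI := ltStructure M; M ⊨ strictDLO := by
  letI := ltStructure M
  rw [model_strictDLO_iff]
  have hslt : ∀ a b : M, slt a b ↔ a < b := fun a b => Iff.rfl
  simp only [hslt]
  refine ⟨fun a b h => asymm h, fun a b c h h' => h.trans h', fun a b => ?_,
    fun a b h => exists_between h, fun a => exists_gt a, fun a => exists_lt a⟩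
  rcases lt_trichotomy a b with h | h | h
  exacts [Or.inl (Or.inl h), Or.inl (Or.inr h), Or.inr h]

theorem exists_instances (M : Type*) [Language.order.Structure M] [h : M ⊨ strictDLO] :
    ∃ _ : LinearOrder M, DenselyOrdered M ∧ NoMaxOrder M ∧ NoMinOrder M ∧
      ∀ a b : M, a < b ↔ slt a b := by
  classical
  obtain ⟨h1, h2, h3, h4, h5, h6⟩ := model_strictDLO_iff.1 h
  haveI : IsTrichotomous M slt := ⟨fun a b => by
    rcases h3 a b with (hh | hh) | hh
    exacts [fun h _ => absurd hh h, fun _ _ => hh, fun _ h => absurd hh h]⟩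
  haveI : IsTrans M slt := ⟨h2⟩
  haveI : IsIrrefl M slt := ⟨fun a ha => h1 a a ha ha⟩
  haveI : IsStrictTotalOrder M slt := {}
  letI : LinearOrder M := linearOrderOfSTO slt
  have hlt : ∀ a b : M, a < b ↔ slt a b := fun a b => Iff.rfl
  refine ⟨_, ⟨fun a b hab => ?_⟩, ⟨fun a => ?_⟩, ⟨fun a => ?_⟩, hlt⟩
  · obtain ⟨c, hc1, hc2⟩ := h4 a b ((hlt a b).1 hab)
    exact ⟨c, (hlt a c).2 hc1, (hlt c b).2 hc2⟩
  · obtain ⟨b, hb⟩ := h5 a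
    exact ⟨b, (hlt a b).2 hb⟩
  · obtain ⟨b, hb⟩ := h6 a
    exact ⟨b, (hlt b a).2 hb⟩

theorem categorical : Cardinal.Categorical Cardinal.aleph0 strictDLO := by
  rintro M N hM hN
  obtain ⟨lM, dM, maxM, minM, hltM⟩ := exists_instances M
  obtain ⟨lN, dN, maxN, minN, hltN⟩ := exists_instances N
  haveI : Countable M := Cardinal.mk_le_aleph0_iff.1 hM.le
  haveI : Countable N := Cardinal.mk_le_aleph0_iff.1 hN.le
  obtain ⟨e⟩ := Order.iso_of_countable_dense M N
  refine ⟨⟨e.toEquiv, fun {n} f _ => isEmptyElim f, fun {n} r x => ?_⟩⟩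
  have key : ∀ (α : Type _) [Language.order.Structure α] (y : Fin 2 → α),
      Structure.RelMap (leSymb : Language.order.Relations 2) y = slt (y 0) (y 1) := by
    intro α _ y
    refine congrArg _ (funext fun i => ?_)
    fin_cases i <;> rfl
  match n, r with
  | 2, .le =>
    show Structure.RelMap (leSymb : Language.order.Relations 2) _ ↔
      Structure.RelMap (leSymb : Language.order.Relations 2) _
    rw [key _ x, key _ (e.toFun ∘ x), Function.comp_apply, Function.comp_apply, ← hltM, ← hltN]
    exact e.lt_iff_lt

theorem isComplete : strictDLO.IsComplete := by
  refine Cardinal.Categorical.isComplete.{0,0,0} _ _ categorical le_rfl (by simp [Language.order.card_eq_one]) ⟨?_⟩ ?_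
  · letI := ltStructure ℚ
    haveI : ℚ ⊨ strictDLO := model_of_lo ℚ
    exact Theory.ModelType.of strictDLO ℚ
  · intro M
    obtain ⟨lM, dM, maxM, minM, hltM⟩ := exists_instances M
    exact NoMaxOrder.infinite

end StrictDLOAux



/-- The theory of dense linear orders without endpoints completely axiomatizes
the order theory of ℚ and of ℝ. -/
theorem strictDLO_axiomatizes_rat_and_real (φ : Language.order.Sentence) :
    ((letI := ltStructure ℚ; ℚ ⊨ φ) ↔ strictDLO ⊨ᵇ φ) ∧
      ((letI := ltStructure ℝ; ℝ ⊨ φ) ↔ strictDLO ⊨ᵇ φ) := by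
  constructor
  · letI := ltStructure ℚ
    haveI : ℚ ⊨ strictDLO := StrictDLOAux.model_of_lo ℚ
    exact StrictDLOAux.isComplete.realize_sentence_iff φ ℚ
  · letI := ltStructure ℝ
    haveI : ℝ ⊨ strictDLO := StrictDLOAux.model_of_lo ℝ
    exact StrictDLOAux.isComplete.realize_sentence_iff φ ℝ
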